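/- arXiv:2304.03517 — 3 statements merged into one kernel-verified Lean document; each statement's English description precedes it below -/
import Mathlib

section
/- For every positive integer n and every integer m ≥ 0, γ_H(m, n+1) = γ_H(m) − Σ_{k=1}^n γ(m,k)/k, where γ_H(m) = γ_H(m,1). -/
open Filter Finset MeasureTheory

/-- `Hgen a n = ∑_{k=0}^n 1/(k+a)`. -/
noncomputable def Hgen (a : ℝ) (n : ℕ) : ℝ := ∑ k ∈ Finset.range (n + 1), 1 / ((k : ℝ) + a)

lemma Hgen_succ_shift (a : ℝ) (k : ℕ) : Hgen (a + 1) k = Hgen a (k + 1) - 1 / a := by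
  unfold Hgen
  rw [Finset.sum_range_succ' (fun j : ℕ => 1 / ((j : ℝ) + a)) (k + 1)]
  simp only [Nat.cast_add, Nat.cast_one, Nat.cast_zero, zero_add, add_sub_cancel_right]
  exact Finset.sum_congr rfl fun j _ => by ring_nf

noncomputable def Faux (a : ℝ) (m : ℕ) (j : ℕ) : ℝ :=
  (Hgen a j - 1 / a) * Real.log ((j : ℝ) + a) ^ m / ((j : ℝ) + a)

lemma key_sum (a : ℝ) (m N : ℕ) :
    (∑ k ∈ Finset.range (N + 1), Hgen (a+1) k * Real.log ((k : ℝ) + (a+1)) ^ m / ((k : ℝ) + (a+1)))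
      = (∑ k ∈ Finset.range (N + 2), Hgen a k * Real.log ((k : ℝ) + a) ^ m / ((k : ℝ) + a))
        - (1/a) * (∑ k ∈ Finset.range (N + 2), Real.log ((k : ℝ) + a) ^ m / ((k : ℝ) + a)) := by
  have h1 : (∑ k ∈ Finset.range (N + 1), Hgen (a+1) k * Real.log ((k : ℝ) + (a+1)) ^ m / ((k : ℝ) + (a+1)))
      = ∑ k ∈ Finset.range (N + 1), Faux a m (k + 1) := by
    refine Finset.sum_congr rfl fun k _ => ?_
    have hlog : ((k : ℝ) + (a + 1)) = ((k + 1 : ℕ) : ℝ) + a := by push_cast; ring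
    rw [hlog, Hgen_succ_shift, Faux]
  have h2 := Finset.sum_range_succ' (Faux a m) (N + 1)
  have hF0 : Faux a m 0 = 0 := by simp [Faux, Hgen]
  have h3 : (∑ k ∈ Finset.range (N + 2), Faux a m k)
      = (∑ k ∈ Finset.range (N + 2), Hgen a k * Real.log ((k : ℝ) + a) ^ m / ((k : ℝ) + a))
        - (1/a) * (∑ k ∈ Finset.range (N + 2), Real.log ((k : ℝ) + a) ^ m / ((k : ℝ) + a)) := by
    rw [Finset.mul_sum, ← Finset.sum_sub_distrib]
    exact Finset.sum_congr rfl fun k _ => by rw [Faux]; ring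
  linarith

lemma stepγ0 (γ0 : ℝ → ℝ)
    (hγ0 : ∀ a : ℝ, 0 < a → Tendsto
      (fun N : ℕ => (∑ k ∈ Finset.range (N + 1), 1 / ((k : ℝ) + a)) - Real.log ((N : ℝ) + a))
      atTop (nhds (γ0 a)))
    (a : ℝ) (ha : 0 < a) : γ0 (a + 1) = γ0 a - 1 / a := by
  have h1 : Tendsto (fun N : ℕ =>
      ((∑ k ∈ Finset.range (N + 2), 1 / ((k : ℝ) + a)) - Real.log (((N : ℝ) + 1) + a)) - 1 / a)
      atTop (nhds (γ0 a - 1 / a)) := by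
    have h := ((hγ0 a ha).comp (tendsto_add_atTop_nat 1)).sub_const (1 / a)
    refine h.congr fun N => ?_
    simp only [Function.comp, Nat.cast_add, Nat.cast_one]
  refine tendsto_nhds_unique (hγ0 (a + 1) (by linarith)) (h1.congr fun N => ?_)
  have hs : (∑ k ∈ Finset.range (N + 2), 1 / ((k : ℝ) + a))
      = (∑ k ∈ Finset.range (N + 1), 1 / ((k : ℝ) + (a + 1))) + 1 / a := by
    rw [Finset.sum_range_succ' (fun j : ℕ => 1 / ((j : ℝ) + a)) (N + 1)]
    simp only [Nat.cast_add, Nat.cast_one, Nat.cast_zero, zero_add]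
    congr 1
    exact Finset.sum_congr rfl fun j _ => by ring_nf
  have hl : Real.log (((N : ℝ) + 1) + a) = Real.log ((N : ℝ) + (a + 1)) := by ring_nf
  rw [hs, hl]
  ring

lemma stepγH (m : ℕ) (γ0 γm γH : ℝ → ℝ)
    (hγ0 : ∀ a : ℝ, 0 < a → Tendsto
      (fun N : ℕ => (∑ k ∈ Finset.range (N + 1), 1 / ((k : ℝ) + a)) - Real.log ((N : ℝ) + a))
      atTop (nhds (γ0 a)))
    (hγm : ∀ a : ℝ, 0 < a → Tendsto
      (fun N : ℕ =>
        (∑ k ∈ Finset.range (N + 1), Real.log ((k : ℝ) + a) ^ m / ((k : ℝ) + a))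
          - Real.log ((N : ℝ) + a) ^ (m + 1) / ((m : ℝ) + 1))
      atTop (nhds (γm a)))
    (hγH : ∀ a : ℝ, 0 < a → Tendsto (fun x : ℝ =>
        (∑ k ∈ Finset.range (Nat.floor x + 1),
            Hgen a k * Real.log ((k : ℝ) + a) ^ m / ((k : ℝ) + a))
          - Real.log (x + a) ^ (m + 2) / ((m : ℝ) + 2)
          - γ0 a * Real.log (x + a) ^ (m + 1) / ((m : ℝ) + 1)) atTop (nhds (γH a)))
    (a : ℝ) (ha : 0 < a) : γH (a + 1) = γH a - γm a / a := by
  have hm1 : Tendsto (fun N : ℕ =>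
      (∑ k ∈ Finset.range (N + 2), Real.log ((k : ℝ) + a) ^ m / ((k : ℝ) + a))
        - Real.log (((N : ℝ) + 1) + a) ^ (m + 1) / ((m : ℝ) + 1)) atTop (nhds (γm a)) := by
    have h := (hγm a ha).comp (tendsto_add_atTop_nat 1)
    refine h.congr fun N => ?_
    simp only [Function.comp, Nat.cast_add, Nat.cast_one]
  have hHa : Tendsto (fun N : ℕ =>
      (∑ k ∈ Finset.range (N + 2), Hgen a k * Real.log ((k : ℝ) + a) ^ m / ((k : ℝ) + a))
        - Real.log (((N : ℝ) + 1) + a) ^ (m + 2) / ((m : ℝ) + 2)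
        - γ0 a * Real.log (((N : ℝ) + 1) + a) ^ (m + 1) / ((m : ℝ) + 1)) atTop (nhds (γH a)) := by
    have h := (hγH a ha).comp
      (tendsto_atTop_add_const_right atTop (1 : ℝ) tendsto_natCast_atTop_atTop)
    refine h.congr fun N => ?_
    have hfloor : Nat.floor ((N : ℝ) + 1) = N + 1 := by
      rw [show ((N : ℝ) + 1) = ((N + 1 : ℕ) : ℝ) by push_cast; ring, Nat.floor_natCast]
    simp only [Function.comp, hfloor]
  have hHa1 : Tendsto (fun N : ℕ =>
      (∑ k ∈ Finset.range (N + 1), Hgen (a+1) k * Real.log ((k : ℝ) + (a+1)) ^ m / ((k : ℝ) + (a+1)))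
        - Real.log ((N : ℝ) + (a+1)) ^ (m + 2) / ((m : ℝ) + 2)
        - γ0 (a+1) * Real.log ((N : ℝ) + (a+1)) ^ (m + 1) / ((m : ℝ) + 1)) atTop
      (nhds (γH (a+1))) := by
    have h := (hγH (a+1) (by linarith)).comp tendsto_natCast_atTop_atTop
    refine h.congr fun N => ?_
    simp only [Function.comp, Nat.floor_natCast]
  have hcomb := hHa.sub (hm1.const_mul (1/a))
  have h0 := stepγ0 γ0 hγ0 a ha
  refine tendsto_nhds_unique hHa1 (hcomb.congr fun N => ?_) |>.trans (by ring)
  rw [key_sum, h0, show Real.log ((N : ℝ) + (a+1)) = Real.log (((N : ℝ) + 1) + a) by ring_nf]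
  ring

theorem stmt2 (n : ℕ) (hn : 1 ≤ n) (m : ℕ)
    (γ0 γm γH : ℝ → ℝ)
    -- `γ(0,a)` for every `a > 0`
    (hγ0 : ∀ a : ℝ, 0 < a → Tendsto
      (fun N : ℕ => (∑ k ∈ Finset.range (N + 1), 1 / ((k : ℝ) + a)) - Real.log ((N : ℝ) + a))
      atTop (nhds (γ0 a)))
    -- the generalized Stieltjes constants `γ(m,a)` for every `a > 0`
    (hγm : ∀ a : ℝ, 0 < a → Tendsto
      (fun N : ℕ =>
        (∑ k ∈ Finset.range (N + 1), Real.log ((k : ℝ) + a) ^ m / ((k : ℝ) + a))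
          - Real.log ((N : ℝ) + a) ^ (m + 1) / ((m : ℝ) + 1))
      atTop (nhds (γm a)))
    -- the harmonic Stieltjes constants `γ_H(m,a)` for every `a > 0`
    (hγH : ∀ a : ℝ, 0 < a → Tendsto (fun x : ℝ =>
        (∑ k ∈ Finset.range (Nat.floor x + 1),
            Hgen a k * Real.log ((k : ℝ) + a) ^ m / ((k : ℝ) + a))
          - Real.log (x + a) ^ (m + 2) / ((m : ℝ) + 2)
          - γ0 a * Real.log (x + a) ^ (m + 1) / ((m : ℝ) + 1)) atTop (nhds (γH a))) :
    γH ((n : ℝ) + 1) = γH 1 - ∑ k ∈ Finset.Icc 1 n, γm (k : ℝ) / (k : ℝ) := by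
  clear hn
  induction n with
  | zero => simp
  | succ p ih =>
    have hstep := stepγH m γ0 γm γH hγ0 hγm hγH ((p : ℝ) + 1) (by positivity)
    rw [show (((p + 1 : ℕ) : ℝ)) = (p : ℝ) + 1 by push_cast; ring, hstep, ih,
      Finset.sum_Icc_succ_top (by omega : 1 ≤ p + 1)]
    push_cast
    ring
end

section
/- For every complex s with Re(s) > 1, ∫_0^∞ x^{s−1} log(1 + e^{−x/2}) / (1 − e^{−x}) dx = 2^{s−1} Γ(s) ( ζ_{H^−}(s) + ζ_{\widetilde{H}}(s) ). -/
open Filter Finset MeasureTheory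

/-- The harmonic number `H_n = ∑_{k=1}^n 1/k` (so `Hnum n = ∑_{k<n} 1/(k+1)`). -/
noncomputable def Hnum (n : ℕ) : ℝ := ∑ k ∈ Finset.range n, 1 / ((k : ℝ) + 1)

/-- The skew harmonic number `H_n^- = ∑_{k=1}^n (-1)^{k-1}/k`. -/
noncomputable def Hskew (n : ℕ) : ℝ := ∑ k ∈ Finset.range n, (-1) ^ k / ((k : ℝ) + 1)

/-- `ζ_{H^-}(s) = ∑_{n=1}^∞ H_n^- / n^s`. -/
noncomputable def zetaHminus (s : ℂ) : ℂ := ∑' n : ℕ, (Hskew (n + 1) : ℂ) / ((n : ℂ) + 1) ^ s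

/-- `ζ_{H̃}(s) = ∑_{n=1}^∞ (-1)^{n-1} H_n/n^s`. -/
noncomputable def zetaHtilde (s : ℂ) : ℂ :=
  ∑' n : ℕ, (-1) ^ n * (Hnum (n + 1) : ℂ) / ((n : ℂ) + 1) ^ s

lemma Hnum_nonneg (n : ℕ) : 0 ≤ Hnum n :=
  Finset.sum_nonneg fun k _ => by positivity

lemma abs_Hskew_le (n : ℕ) : |Hskew n| ≤ Hnum n := by
  refine (Finset.abs_sum_le_sum_abs _ _).trans ?_
  refine Finset.sum_le_sum fun k _ => ?_
  rw [abs_div, abs_pow, abs_neg, abs_one, one_pow]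
  rw [abs_of_pos (by positivity : (0:ℝ) < (k:ℝ)+1)]

lemma Hnum_le (n : ℕ) : Hnum (n + 1) ≤ 1 + Real.log ((n : ℝ) + 1) := by
  induction n with
  | zero => simp [Hnum]
  | succ m ih =>
    have h1 : Hnum (m + 2) = Hnum (m + 1) + 1 / ((m : ℝ) + 2) := by
      rw [Hnum, Finset.sum_range_succ, ← Hnum]; push_cast; ring_nf
    have hlog : Real.log ((m : ℝ) + 1) + 1 / ((m : ℝ) + 2) ≤ Real.log ((m : ℝ) + 2) := by
      have hx : (0:ℝ) < ((m : ℝ) + 1) / ((m : ℝ) + 2) := by positivity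
      have := Real.log_le_sub_one_of_pos hx
      rw [Real.log_div (by positivity) (by positivity)] at this
      have h2 : ((m : ℝ) + 1) / ((m : ℝ) + 2) - 1 = -(1 / ((m : ℝ) + 2)) := by
        field_simp
        norm_num
      linarith [this, h2.le]
    have key : Hnum (m + 2) ≤ 1 + Real.log ((m:ℝ) + 2) := by linarith [h1, ih, hlog]
    have hc : ((m + 1 : ℕ) : ℝ) + 1 = (m:ℝ) + 2 := by push_cast; ring
    rw [hc]
    exact key

lemma summable_master {σ : ℝ} (hσ : 1 < σ) :
    Summable (fun n : ℕ => (1 + Real.log ((n : ℝ) + 1)) / ((n : ℝ) + 1) ^ σ) := by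
  set ε := (σ - 1) / 2 with hε
  have hε0 : 0 < ε := by rw [hε]; linarith
  have hsum : Summable (fun n : ℕ => ((n : ℝ) + 1) ^ (ε - σ)) := by
    have h1 : Summable (fun n : ℕ => 1 / (n : ℝ) ^ (σ - ε)) :=
      Real.summable_one_div_nat_rpow.mpr (by rw [hε]; linarith)
    have h2 := (summable_nat_add_iff 1).mpr h1
    refine h2.congr fun n => ?_
    push_cast
    rw [one_div, ← Real.rpow_neg (by positivity), neg_sub]
  refine Summable.of_nonneg_of_le (fun n => ?_) (fun n => ?_)
    (hsum.mul_left (1 + 1 / ε))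
  · have : (0:ℝ) ≤ Real.log ((n:ℝ)+1) := Real.log_nonneg (by push_cast; linarith)
    positivity
  · have hlog : Real.log ((n:ℝ)+1) ≤ ((n:ℝ)+1) ^ ε / ε :=
      Real.log_le_rpow_div (by positivity) hε0
    have hone : (1:ℝ) ≤ ((n:ℝ)+1) ^ ε :=
      Real.one_le_rpow (by push_cast; linarith) hε0.le
    have hnum : 1 + Real.log ((n:ℝ)+1) ≤ (1 + 1/ε) * ((n:ℝ)+1) ^ ε := by
      have : ((n:ℝ)+1)^ε/ε = (1/ε) * ((n:ℝ)+1)^ε := by ring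
      nlinarith
    have hpos : (0:ℝ) < ((n:ℝ)+1) ^ σ := by positivity
    rw [div_le_iff₀ hpos]
    calc 1 + Real.log ((n:ℝ)+1) ≤ (1 + 1/ε) * ((n:ℝ)+1) ^ ε := hnum
      _ = (1 + 1/ε) * ((n:ℝ)+1) ^ (ε - σ) * ((n:ℝ)+1) ^ σ := by
          rw [mul_assoc, ← Real.rpow_add (by positivity)]; ring_nf

lemma keyHasSum {y : ℝ} (hy0 : 0 < y) (hy1 : y < 1) :
    HasSum (fun n : ℕ => (Hskew (n + 1) + (-1) ^ n * Hnum (n + 1)) / 2 * y ^ (n + 1))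
      (Real.log (1 + y) / (1 - y * y)) := by
  set f : ℕ → ℝ := fun k => (-1) ^ k * y ^ (k + 1) / ((k : ℝ) + 1) with hfdef
  have hf : HasSum f (Real.log (1 + y)) := by
    have h := Real.hasSum_pow_div_log_of_abs_lt_one
      (x := -y) (by rw [abs_neg, abs_of_pos hy0]; exact hy1)
    have h' := h.neg
    rw [sub_neg_eq_add, neg_neg] at h'
    have hfun : (fun n : ℕ => -((-y) ^ (n + 1) / ((n : ℝ) + 1))) = f := by
      funext n
      rw [hfdef]
      rw [neg_pow, pow_succ]
      ring
    rwa [hfun] at h'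
  have hg1 : HasSum (fun k : ℕ => y ^ k) (1 - y)⁻¹ :=
    hasSum_geometric_of_lt_one hy0.le hy1
  have hg2 : HasSum (fun k : ℕ => (-y) ^ k) (1 + y)⁻¹ := by
    have h := hasSum_geometric_of_norm_lt_one
      (ξ := -y) (by rw [norm_neg, Real.norm_eq_abs, abs_of_pos hy0]; exact hy1)
    rwa [sub_neg_eq_add] at h
  have hfs : Summable fun k => ‖f k‖ := by
    refine Summable.of_nonneg_of_le (fun k => norm_nonneg _) (fun k => ?_)
      (summable_geometric_of_lt_one hy0.le hy1)
    rw [hfdef, Real.norm_eq_abs, abs_div, abs_mul, abs_pow, abs_pow, abs_neg, abs_one,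
      one_pow, one_mul, abs_of_pos hy0, abs_of_pos (by positivity : (0:ℝ) < (k:ℝ)+1)]
    calc y ^ (k+1) / ((k:ℝ)+1) ≤ y ^ (k+1) := by
          apply div_le_self (by positivity)
          linarith [Nat.cast_nonneg (α := ℝ) k]
      _ ≤ y ^ k := pow_le_pow_of_le_one hy0.le hy1.le (Nat.le_succ k)
  have hg1s : Summable fun k => ‖(fun k : ℕ => y ^ k) k‖ := by
    simpa [Real.norm_eq_abs, abs_of_pos hy0, abs_pow]
      using summable_geometric_of_lt_one hy0.le hy1
  have hg2s : Summable fun k => ‖(fun k : ℕ => (-y) ^ k) k‖ := by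
    refine (summable_geometric_of_lt_one hy0.le hy1).congr fun k => ?_
    rw [Real.norm_eq_abs, abs_pow, abs_neg, abs_of_pos hy0]
  have hC1 := hasSum_sum_range_mul_of_summable_norm hfs hg1s
  have hC2 := hasSum_sum_range_mul_of_summable_norm hfs hg2s
  rw [hf.tsum_eq, hg1.tsum_eq] at hC1
  rw [hf.tsum_eq, hg2.tsum_eq] at hC2
  have e1 : (fun n : ℕ => ∑ k ∈ range (n + 1), f k * y ^ (n - k))
      = fun n : ℕ => Hskew (n + 1) * y ^ (n + 1) := by
    funext n
    rw [Hskew, Finset.sum_mul]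
    refine Finset.sum_congr rfl fun k hk => ?_
    have hk' : k ≤ n := Nat.lt_succ_iff.mp (Finset.mem_range.mp hk)
    have hpow : y ^ (k + 1) * y ^ (n - k) = y ^ (n + 1) := by
      rw [← pow_add]; congr 1; omega
    rw [hfdef, ← hpow]; ring
  have e2 : (fun n : ℕ => ∑ k ∈ range (n + 1), f k * (-y) ^ (n - k))
      = fun n : ℕ => (-1) ^ n * Hnum (n + 1) * y ^ (n + 1) := by
    funext n
    rw [Hnum, Finset.mul_sum, Finset.sum_mul]
    refine Finset.sum_congr rfl fun k hk => ?_
    have hk' : k ≤ n := Nat.lt_succ_iff.mp (Finset.mem_range.mp hk)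
    have hpow : y ^ (k + 1) * y ^ (n - k) = y ^ (n + 1) := by
      rw [← pow_add]; congr 1; omega
    have hsgn : (-1 : ℝ) ^ k * (-1) ^ (n - k) = (-1) ^ n := by
      rw [← pow_add]; congr 1; omega
    rw [hfdef, neg_pow, ← hpow, ← hsgn]; ring
  rw [e1] at hC1
  rw [e2] at hC2
  have hAB := (hC1.add hC2).mul_left (2⁻¹ : ℝ)
  have hval : (2⁻¹ : ℝ) * (Real.log (1 + y) * (1 - y)⁻¹ + Real.log (1 + y) * (1 + y)⁻¹)
      = Real.log (1 + y) / (1 - y * y) := by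
    have h1 : (1:ℝ) - y ≠ 0 := by linarith
    have h2 : (1:ℝ) + y ≠ 0 := by linarith
    have h3 : (1:ℝ) - y * y ≠ 0 := by nlinarith
    rw [show (1:ℝ) - y * y = (1 - y) * (1 + y) by ring, div_eq_mul_inv, mul_inv]
    linear_combination (-(Real.log (1 + y) / 2) * (1 - y)⁻¹) * inv_mul_cancel₀ h2
      + (-(Real.log (1 + y) / 2) * (1 + y)⁻¹) * inv_mul_cancel₀ h1
  rw [hval] at hAB
  have hfun2 : (fun n : ℕ => (2⁻¹:ℝ) * (Hskew (n+1) * y^(n+1) + (-1)^n * Hnum (n+1) * y^(n+1)))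
      = fun n : ℕ => (Hskew (n+1) + (-1)^n * Hnum (n+1)) / 2 * y ^ (n+1) := by
    funext n; ring
  rwa [hfun2] at hAB

theorem stmt11 (s : ℂ) (hs : 1 < s.re) :
    (∫ x in Set.Ioi (0 : ℝ),
        (x : ℂ) ^ (s - 1) * ((Real.log (1 + Real.exp (-x / 2)) : ℝ) : ℂ)
          / (1 - ((Real.exp (-x) : ℝ) : ℂ)))
      = (2 : ℂ) ^ (s - 1) * Complex.Gamma s * (zetaHminus s + zetaHtilde s) := by
  have hs0 : 0 < s.re := by linarith
  set σ := s.re with hσdef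
  set a : ℕ → ℂ := fun n => (((Hskew (n+1) + (-1)^n * Hnum (n+1)) / 2 : ℝ) : ℂ) with ha
  set p : ℕ → ℝ := fun n => ((n:ℝ)+1)/2 with hp
  set F : ℝ → ℂ := fun t =>
    ((Real.log (1 + Real.exp (-t/2)) / (1 - Real.exp (-t)) : ℝ) : ℂ) with hFdef
  have hp_pos : ∀ n, 0 < p n := fun n => by rw [hp]; positivity
  -- bound on the coefficients
  have habound : ∀ n : ℕ, ‖a n‖ ≤ 1 + Real.log ((n:ℝ)+1) := by
    intro n
    rw [ha]
    simp only [Complex.norm_real, Real.norm_eq_abs]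
    have h1 := abs_Hskew_le (n+1)
    have h2 : |(-1:ℝ)^n * Hnum (n+1)| = Hnum (n+1) := by
      rw [abs_mul, abs_pow, abs_neg, abs_one, one_pow, one_mul,
        abs_of_nonneg (Hnum_nonneg _)]
    have h3 := Hnum_le n
    calc |(Hskew (n+1) + (-1)^n * Hnum (n+1)) / 2|
        = |Hskew (n+1) + (-1)^n * Hnum (n+1)| / 2 := by rw [abs_div, abs_two]
      _ ≤ (|Hskew (n+1)| + |(-1:ℝ)^n * Hnum (n+1)|) / 2 := by
          have := abs_add_le (Hskew (n+1)) ((-1:ℝ)^n * Hnum (n+1)); linarith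
      _ ≤ 1 + Real.log ((n:ℝ)+1) := by rw [h2]; linarith
  -- pointwise expansion
  have hF : ∀ t ∈ Set.Ioi (0:ℝ), HasSum (fun n => a n * (Real.exp (-p n * t) : ℝ)) (F t) := by
    intro t ht
    rw [Set.mem_Ioi] at ht
    set y := Real.exp (-t/2) with hy
    have hy0 : 0 < y := Real.exp_pos _
    have hy1 : y < 1 := by
      rw [hy, Real.exp_lt_one_iff]; linarith
    have hxx : Real.exp (-t) = y * y := by rw [hy, ← Real.exp_add]; congr 1; ring
    have key := keyHasSum hy0 hy1
    have keyC := key.mapL Complex.ofRealCLM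
    have hterm : (fun n : ℕ =>
        Complex.ofRealCLM ((Hskew (n+1) + (-1)^n * Hnum (n+1)) / 2 * y ^ (n+1)))
        = fun n => a n * (Real.exp (-p n * t) : ℝ) := by
      funext n
      have hexp : Real.exp (-p n * t) = y ^ (n+1) := by
        rw [hy, ← Real.exp_nat_mul]
        congr 1
        rw [hp]; push_cast; ring
      rw [hexp]
      simp only [Complex.ofRealCLM_apply, ha]
      push_cast
      ring
    have hFval : Complex.ofRealCLM (Real.log (1+y) / (1 - y*y)) = F t := by
      rw [hFdef]
      simp only [Complex.ofRealCLM_apply]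
      rw [hxx, ← hy]
    rw [hterm, hFval] at keyC
    exact keyC
  -- summability of the coefficient series
  have h_sum : Summable fun n : ℕ => ‖a n‖ / (p n) ^ σ := by
    refine Summable.of_nonneg_of_le (fun n => by positivity) (fun n => ?_)
      ((summable_master hs).mul_left ((2:ℝ) ^ σ))
    have hpn : (p n) ^ σ = ((n:ℝ)+1) ^ σ / 2 ^ σ := by
      rw [hp]
      exact Real.div_rpow (by positivity : (0:ℝ) ≤ (n:ℝ)+1) (by norm_num : (0:ℝ) ≤ 2) σ
    have hd1 : ((n:ℝ)+1) ^ σ ≠ 0 := by positivity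
    have hd2 : (2:ℝ) ^ σ ≠ 0 := by positivity
    have h1 : ‖a n‖ / (p n) ^ σ = (2:ℝ)^σ * (‖a n‖ / ((n:ℝ)+1)^σ) := by
      rw [hpn]; field_simp
    rw [h1]
    gcongr
    exact habound n
  have H := hasSum_mellin (fun n => Or.inr (hp_pos n)) hs0 hF h_sum
  have hmellin : mellin F s = ∫ x in Set.Ioi (0:ℝ),
      (x:ℂ)^(s-1) * ((Real.log (1 + Real.exp (-x/2)) : ℝ):ℂ)
        / (1 - ((Real.exp (-x) : ℝ):ℂ)) := by
    rw [mellin]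
    refine setIntegral_congr_fun measurableSet_Ioi fun t ht => ?_
    rw [hFdef, smul_eq_mul]
    simp only
    rw [Complex.ofReal_div, Complex.ofReal_sub, Complex.ofReal_one, mul_div_assoc]
  set S1 : ℕ → ℂ := fun n => (Hskew (n+1) : ℂ) / ((n:ℂ)+1)^s with hS1def
  set S2 : ℕ → ℂ := fun n => (-1)^n * (Hnum (n+1) : ℂ) / ((n:ℂ)+1)^s with hS2def
  have hcast : ∀ n : ℕ, ((n:ℂ)+1) = (((n:ℝ)+1 : ℝ) : ℂ) := by intro n; push_cast; ring
  have hnorm : ∀ n : ℕ, ‖((n:ℂ)+1)^s‖ = ((n:ℝ)+1) ^ σ := by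
    intro n
    rw [hcast n,
      Complex.norm_cpow_eq_rpow_re_of_pos (by positivity)]
  have hS1 : Summable S1 := by
    refine Summable.of_norm (Summable.of_nonneg_of_le (fun n => norm_nonneg _)
      (fun n => ?_) (summable_master hs))
    rw [hS1def]
    simp only
    rw [norm_div, hnorm]
    gcongr
    rw [Complex.norm_real, Real.norm_eq_abs]
    exact (abs_Hskew_le _).trans (Hnum_le n)
  have hS2 : Summable S2 := by
    refine Summable.of_norm (Summable.of_nonneg_of_le (fun n => norm_nonneg _)
      (fun n => ?_) (summable_master hs))
    rw [hS2def]
    simp only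
    rw [norm_div, hnorm, norm_mul, norm_pow, norm_neg, norm_one, one_pow, one_mul]
    gcongr
    rw [Complex.norm_real, Real.norm_eq_abs, abs_of_nonneg (Hnum_nonneg _)]
    exact Hnum_le n
  have hNe : ∀ n : ℕ, ((n:ℂ)+1)^s ≠ 0 := by
    intro n
    rw [← norm_ne_zero_iff, hnorm]
    positivity
  have h2s : (2:ℂ)^s ≠ 0 := by
    rw [← norm_ne_zero_iff]
    rw [show (2:ℂ) = ((2:ℝ):ℂ) by norm_num,
      Complex.norm_cpow_eq_rpow_re_of_pos (by norm_num)]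
    positivity
  have hterm2 : (fun n : ℕ => Complex.Gamma s * a n / (↑(p n) : ℂ)^s)
      = fun n => (2:ℂ)^(s-1) * Complex.Gamma s * (S1 n + S2 n) := by
    funext n
    have hps : (↑(p n) : ℂ)^s = ((n:ℂ)+1)^s * ((2:ℂ)^s)⁻¹ := by
      have h12 : p n = ((n:ℝ)+1) * (2⁻¹ : ℝ) := by rw [hp]; ring
      rw [h12, Complex.ofReal_mul,
        Complex.mul_cpow_ofReal_nonneg (by positivity : (0:ℝ) ≤ (n:ℝ)+1)
          (by norm_num : (0:ℝ) ≤ 2⁻¹)]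
      rw [← hcast n]
      congr 1
      rw [show ((2⁻¹:ℝ):ℂ) = (2:ℂ)⁻¹ by norm_num]
      rw [Complex.inv_cpow]
      rw [show (2:ℂ) = ((2:ℝ):ℂ) by norm_num,
        Complex.arg_ofReal_of_nonneg (by norm_num)]
      exact Ne.symm Real.pi_ne_zero
    have h2s1 : (2:ℂ)^(s-1) = (2:ℂ)^s / 2 := by
      rw [Complex.cpow_sub _ _ (by norm_num : (2:ℂ) ≠ 0), Complex.cpow_one]
    rw [hps, h2s1, hS1def, hS2def, ha]
    simp only
    push_cast
    field_simp
  rw [hterm2] at H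
  have Hsum2 := (hS1.hasSum.add hS2.hasSum).mul_left ((2:ℂ)^(s-1) * Complex.Gamma s)
  rw [show zetaHminus s = ∑' n, S1 n from rfl, show zetaHtilde s = ∑' n, S2 n from rfl,
    ← hmellin]
  exact H.unique Hsum2
end

section
/- For every complex s with Re(s) > 1, (1/2) ( ζ_H(s,1) + ζ_H(s,1/2) ) = ζ_H(s) + 2^{s−1} ζ_{H^−}(s) + 2^{s−1} ζ_{\widetilde{H}}(s). -/
open Filter Finset MeasureTheory

/-- The harmonic Hurwitz zeta function `ζ_H(s,a) = ∑_{n=0}^∞ H_n(a)/(n+a)^s`. -/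
noncomputable def zetaH (s : ℂ) (a : ℝ) : ℂ :=
  ∑' n : ℕ, (Hgen a n : ℂ) / ((n : ℂ) + (a : ℂ)) ^ s

/-- The harmonic zeta function `ζ_H(s) = ∑_{n=1}^∞ H_n/n^s`. -/
noncomputable def zetaHnat (s : ℂ) : ℂ := ∑' n : ℕ, (Hnum (n + 1) : ℂ) / ((n : ℂ) + 1) ^ s

noncomputable def Osum (m : ℕ) : ℝ := ∑ k ∈ Finset.range m, 1 / (2 * (k : ℝ) + 1)

lemma Osum_le (m : ℕ) : Osum m ≤ Hnum m := by
  refine Finset.sum_le_sum fun k _ => ?_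
  have hk : (0:ℝ) ≤ (k:ℝ) := Nat.cast_nonneg k
  rw [one_div, one_div]
  exact inv_anti₀ (by linarith) (by linarith)

lemma Hgen_one (n : ℕ) : Hgen 1 n = Hnum (n + 1) := rfl

lemma Hgen_half (n : ℕ) : Hgen (1/2) n = 2 * Osum (n + 1) := by
  unfold Hgen Osum
  rw [Finset.mul_sum]
  refine Finset.sum_congr rfl fun k _ => ?_
  have h1 : (k : ℝ) + 1/2 ≠ 0 := by positivity
  have h2 : 2 * (k : ℝ) + 1 ≠ 0 := by positivity
  field_simp

lemma Hskew_succ (n : ℕ) : Hskew (n+1) = Hskew n + (-1)^n/((n:ℝ)+1) := by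
  rw [Hskew, Finset.sum_range_succ, ← Hskew]

lemma Hnum_succ (n : ℕ) : Hnum (n+1) = Hnum n + 1/((n:ℝ)+1) := by
  rw [Hnum, Finset.sum_range_succ, ← Hnum]

lemma Osum_succ (n : ℕ) : Osum (n+1) = Osum n + 1/(2*(n:ℝ)+1) := by
  rw [Osum, Finset.sum_range_succ, ← Osum]

lemma skew_add (m : ℕ) : Hskew (2*m+1) + Hnum (2*m+1) = 2 * Osum (m+1) := by
  induction m with
  | zero => norm_num [Hskew, Hnum, Osum]
  | succ m ih =>
    have e : 2*(m+1)+1 = (2*m+1)+1+1 := by ring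
    have hodd : (-1 : ℝ) ^ (2*m+1) = -1 := Odd.neg_one_pow ⟨m, by ring⟩
    have heven : (-1 : ℝ) ^ (2*m+1+1) = 1 := Even.neg_one_pow ⟨m+1, by ring⟩
    have eS : Hskew ((2*m+1)+1+1) = Hskew (2*m+1) - 1/(2*(m:ℝ)+2) + 1/(2*(m:ℝ)+3) := by
      rw [Hskew_succ, Hskew_succ, hodd, heven]; push_cast; ring
    have eN : Hnum ((2*m+1)+1+1) = Hnum (2*m+1) + 1/(2*(m:ℝ)+2) + 1/(2*(m:ℝ)+3) := by
      rw [Hnum_succ, Hnum_succ]; push_cast; ring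
    have eO : Osum ((m+1)+1) = Osum (m+1) + 1/(2*(m:ℝ)+3) := by
      rw [Osum_succ]; push_cast; ring
    rw [e, eS, eN, eO]
    linarith [ih]

lemma skew_sub (m : ℕ) : Hskew (2*m+2) - Hnum (2*m+2) = -Hnum (m+1) := by
  induction m with
  | zero => norm_num [Hskew, Hnum]
  | succ m ih =>
    have e : 2*(m+1)+2 = (2*m+2)+1+1 := by ring
    have heven : (-1 : ℝ) ^ (2*m+2) = 1 := Even.neg_one_pow ⟨m+1, by ring⟩
    have hodd : (-1 : ℝ) ^ (2*m+2+1) = -1 := Odd.neg_one_pow ⟨m+1, by ring⟩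
    have eS : Hskew ((2*m+2)+1+1) = Hskew (2*m+2) + 1/(2*(m:ℝ)+3) - 1/(2*(m:ℝ)+4) := by
      rw [Hskew_succ, Hskew_succ, heven, hodd]; push_cast; ring
    have eN : Hnum ((2*m+2)+1+1) = Hnum (2*m+2) + 1/(2*(m:ℝ)+3) + 1/(2*(m:ℝ)+4) := by
      rw [Hnum_succ, Hnum_succ]; push_cast; ring
    have eN2 : Hnum ((m+1)+1) = Hnum (m+1) + 1/((m:ℝ)+2) := by
      rw [Hnum_succ]; push_cast; ring
    have h4 : 1/(2*(m:ℝ)+4) + 1/(2*(m:ℝ)+4) = 1/((m:ℝ)+2) := by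
      have : (2*(m:ℝ)+4) ≠ 0 := by positivity
      have : ((m:ℝ)+2) ≠ 0 := by positivity
      field_simp
      ring
    rw [e, eS, eN, eN2]
    linarith [ih, h4]

lemma Hnum_le_log (n : ℕ) : Hnum (n+1) ≤ 1 + Real.log ((n : ℝ) + 1) := by
  induction n with
  | zero => simp [Hnum]
  | succ n ih =>
    rw [Hnum, Finset.sum_range_succ, ← Hnum]
    have hlog : Real.log ((n:ℝ)+1) + 1/((n:ℝ)+1+1) ≤ Real.log ((n:ℝ)+1+1) := by
      have hx : (0:ℝ) < ((n:ℝ)+1)/((n:ℝ)+1+1) := by positivity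
      have h := Real.log_le_sub_one_of_pos hx
      rw [Real.log_div (by positivity) (by positivity)] at h
      have h2 : ((n:ℝ)+1)/((n:ℝ)+1+1) = 1 - 1/((n:ℝ)+1+1) := by
        field_simp
        ring
      rw [h2] at h
      linarith
    push_cast
    push_cast at ih
    linarith

lemma summable_shift {p : ℝ} (hp : 1 < p) : Summable (fun n : ℕ => ((n:ℝ)+1) ^ (-p)) := by
  have h1 : Summable (fun n : ℕ => 1 / (n:ℝ) ^ p) := Real.summable_one_div_nat_rpow.mpr hp
  have h2 := (summable_nat_add_iff 1).mpr h1
  refine h2.congr fun n => ?_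
  rw [Real.rpow_neg (by positivity), one_div]
  push_cast
  ring_nf

lemma summable_H {r : ℝ} (hr : 1 < r) :
    Summable (fun n : ℕ => Hnum (n+1) * ((n:ℝ)+1) ^ (-r)) := by
  set ε : ℝ := (r-1)/2 with hεdef
  have hε : 0 < ε := by simp only [hεdef]; linarith
  have hkey : Summable (fun n : ℕ => ((n:ℝ)+1)^(-r) + (1/ε) * ((n:ℝ)+1)^(ε - r)) := by
    refine (summable_shift hr).add ?_
    have : Summable (fun n : ℕ => ((n:ℝ)+1)^(-(r-ε))) := summable_shift (by simp only [hεdef]; linarith)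
    refine (this.mul_left (1/ε)).congr fun n => ?_
    rw [show ε - r = -(r-ε) by ring]
  refine Summable.of_nonneg_of_le (fun n => ?_) (fun n => ?_) hkey
  · exact mul_nonneg (Hnum_nonneg _) (Real.rpow_nonneg (by positivity) _)
  · have h1 : Hnum (n+1) ≤ 1 + ((n:ℝ)+1)^ε / ε := by
      refine (Hnum_le_log n).trans ?_
      have := Real.log_le_rpow_div (x := (n:ℝ)+1) (by positivity) hε
      linarith
    have h2 : (0:ℝ) ≤ ((n:ℝ)+1)^(-r) := Real.rpow_nonneg (by positivity) _
    calc Hnum (n+1) * ((n:ℝ)+1)^(-r) ≤ (1 + ((n:ℝ)+1)^ε / ε) * ((n:ℝ)+1)^(-r) := by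
          exact mul_le_mul_of_nonneg_right h1 h2
      _ = ((n:ℝ)+1)^(-r) + (1/ε) * (((n:ℝ)+1)^ε * ((n:ℝ)+1)^(-r)) := by ring
      _ = ((n:ℝ)+1)^(-r) + (1/ε) * ((n:ℝ)+1)^(ε - r) := by
          rw [← Real.rpow_add (by positivity)]; ring_nf

lemma cpow_ne_zero' {x : ℂ} (hx : x ≠ 0) (y : ℂ) : x ^ y ≠ 0 := by
  rw [Complex.cpow_def_of_ne_zero hx]; exact Complex.exp_ne_zero _

lemma summable_aux {s : ℂ} (hs : 1 < s.re) {c : ℕ → ℝ} (hc : ∀ n, |c n| ≤ Hnum (n+1)) :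
    Summable fun n : ℕ => (c n : ℂ) / ((n:ℂ)+1)^s := by
  apply Summable.of_norm
  refine Summable.of_nonneg_of_le (fun n => norm_nonneg _) (fun n => ?_) (summable_H hs)
  have hpos : (0:ℝ) < (n:ℝ)+1 := by positivity
  have hcast : ((n:ℂ)+1) = (((n:ℝ)+1 : ℝ) : ℂ) := by push_cast; ring
  rw [norm_div, hcast,
    Complex.norm_cpow_eq_rpow_re_of_pos hpos, Complex.norm_real, Real.norm_eq_abs,
    div_eq_mul_inv, ← Real.rpow_neg hpos.le]
  exact mul_le_mul_of_nonneg_right (hc n) (Real.rpow_nonneg hpos.le _)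

theorem stmt12 (s : ℂ) (hs : 1 < s.re) :
    (1 / 2) * (zetaH s 1 + zetaH s (1 / 2))
      = zetaHnat s + (2 : ℂ) ^ (s - 1) * zetaHminus s + (2 : ℂ) ^ (s - 1) * zetaHtilde s := by
  have h2ne : (2:ℂ) ≠ 0 := two_ne_zero
  have hc_ne : (2:ℂ)^s ≠ 0 := cpow_ne_zero' h2ne s
  have hS1 : Summable fun n : ℕ => (Hnum (n+1) : ℂ) / ((n:ℂ)+1)^s :=
    summable_aux hs fun n => le_of_eq (abs_of_nonneg (Hnum_nonneg _))
  have hS2 : Summable fun n : ℕ => (Hskew (n+1) : ℂ) / ((n:ℂ)+1)^s :=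
    summable_aux hs fun n => abs_Hskew_le (n+1)
  have hS3 : Summable fun n : ℕ => (-1:ℂ)^n * (Hnum (n+1) : ℂ) / ((n:ℂ)+1)^s := by
    refine (summable_aux hs (c := fun n => (-1)^n * Hnum (n+1)) fun n => ?_).congr fun n => ?_
    · rw [abs_mul, abs_pow, abs_neg, abs_one, one_pow, one_mul, abs_of_nonneg (Hnum_nonneg _)]
    · push_cast; ring
  set g : ℕ → ℂ := fun n => ((Hskew (n+1):ℂ) + (-1)^n * (Hnum (n+1):ℂ)) / ((n:ℂ)+1)^s
    with hgdef
  have hg : Summable g := by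
    refine (hS2.add hS3).congr fun n => ?_
    simp only [hgdef]
    rw [add_div]
  have heq_mt : zetaHminus s + zetaHtilde s = ∑' n, g n := by
    rw [zetaHminus, zetaHtilde, ← Summable.tsum_add hS2 hS3]
    refine tsum_congr fun n => ?_
    simp only [hgdef]
    rw [add_div]
  have hsplit : (∑' m, g (2*m)) + (∑' m, g (2*m+1)) = ∑' n, g n :=
    tsum_even_add_odd (hg.comp_injective (mul_right_injective₀ two_ne_zero))
      (hg.comp_injective fun a b hab => by omega)
  set T : ℂ := ∑' m : ℕ, (Osum (m+1) : ℂ) / (2*(m:ℂ)+1)^s with hT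
  have heven : ∑' m, g (2*m) = 2 * T := by
    rw [hT, ← tsum_mul_left]
    refine tsum_congr fun m => ?_
    simp only [hgdef]
    have hp : (-1:ℂ)^(2*m) = 1 := by rw [pow_mul]; norm_num
    have hnum : (Hskew (2*m+1) : ℂ) + (-1:ℂ)^(2*m) * (Hnum (2*m+1) : ℂ)
        = 2 * (Osum (m+1) : ℂ) := by
      rw [hp, one_mul]
      exact_mod_cast congrArg Complex.ofReal (skew_add m)
    have hden : ((2*m : ℕ):ℂ) + 1 = 2*(m:ℂ)+1 := by push_cast; ring
    rw [hden, hnum, mul_div_assoc]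
  have hodd : ∑' m, g (2*m+1) = -((2:ℂ)^s)⁻¹ * zetaHnat s := by
    rw [zetaHnat, ← tsum_mul_left]
    refine tsum_congr fun m => ?_
    simp only [hgdef]
    have hp : (-1:ℂ)^(2*m+1) = -1 := Odd.neg_one_pow ⟨m, by ring⟩
    have hidx : 2*m+1+1 = 2*m+2 := rfl
    have hnum : (Hskew (2*m+1+1) : ℂ) + (-1:ℂ)^(2*m+1) * (Hnum (2*m+1+1) : ℂ)
        = -(Hnum (m+1) : ℂ) := by
      rw [hp, hidx]
      have h1 := congrArg Complex.ofReal (skew_sub m)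
      push_cast at h1 ⊢
      linear_combination h1
    have hden : ((2*m+1 : ℕ):ℂ) + 1 = (((2:ℝ)):ℂ) * ((((m:ℝ)+1) : ℝ):ℂ) := by push_cast; ring
    rw [hden, Complex.mul_cpow_ofReal_nonneg (by norm_num) (by positivity), hnum]
    have hm1 : ((m:ℂ)+1) ≠ 0 := by
      have : ((((m:ℝ)+1) : ℝ):ℂ) ≠ 0 := Complex.ofReal_ne_zero.mpr (by positivity)
      simpa using this
    have c1 : (((2:ℝ)):ℂ) = (2:ℂ) := by norm_num
    have c2 : ((((m:ℝ)+1) : ℝ):ℂ) = (m:ℂ)+1 := by push_cast; ring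
    rw [c1, c2]
    field_simp [cpow_ne_zero' hm1 s]
  have hZ1 : zetaH s 1 = zetaHnat s := by
    rw [zetaH, zetaHnat]
    refine tsum_congr fun n => ?_
    rw [Hgen_one]
    norm_num
  have hZhalf : zetaH s (1/2) = 2 * (2:ℂ)^s * T := by
    rw [zetaH, hT, ← tsum_mul_left]
    refine tsum_congr fun n => ?_
    rw [Hgen_half]
    have hden : (n:ℂ) + ((1/2 : ℝ):ℂ) = ((2*(n:ℝ)+1 : ℝ):ℂ) * (((1/2:ℝ)):ℂ) := by
      push_cast; ring
    rw [hden, Complex.mul_cpow_ofReal_nonneg (by positivity) (by norm_num)]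
    have harg : (2:ℂ).arg ≠ Real.pi := by
      rw [show (2:ℂ) = ((2:ℝ):ℂ) by norm_num, Complex.arg_ofReal_of_nonneg (by norm_num)]
      exact Ne.symm Real.pi_ne_zero
    have h12 : (((1/2:ℝ)):ℂ) = (2:ℂ)⁻¹ := by norm_num
    rw [h12, Complex.inv_cpow _ _ harg]
    have c3 : ((2*(n:ℝ)+1 : ℝ):ℂ) = 2*(n:ℂ)+1 := by push_cast; ring
    have hd2 : (2*(n:ℂ)+1) ≠ 0 := by
      have : ((2*(n:ℝ)+1 : ℝ):ℂ) ≠ 0 := Complex.ofReal_ne_zero.mpr (by positivity)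
      rwa [c3] at this
    rw [c3]
    push_cast
    field_simp [cpow_ne_zero' hd2 s]
  have hrhs : zetaHnat s + (2:ℂ)^(s-1) * zetaHminus s + (2:ℂ)^(s-1) * zetaHtilde s
      = zetaHnat s + (2:ℂ)^(s-1) * (zetaHminus s + zetaHtilde s) := by ring
  rw [hZ1, hZhalf, hrhs, heq_mt, ← hsplit, heven, hodd, Complex.cpow_sub s 1 h2ne,
    Complex.cpow_one]
  field_simp
  ring
end
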